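/- Let X be a nonempty compact metric space and μ a finite Borel measure on X with full support (μ(U) > 0 for every nonempty open U ⊆ X). Let u, w : X → ℝ be continuous with min u = 0, max u = l > 0 and min w = 0. For t ∈ [0,1] set h_t := min(t·l, u) + w and g(t) := ∫_X normalize(h_t) dμ. Then g is Lipschitz continuous on [0,1] (indeed |g(t) − g(s)| ≤ |t − s| · l · μ(X)), and there exists a unique t₀ ∈ [0,1] such that g(t₀) ≤ g(t) for all t ∈ [0,1]. -/

import Mathlib

open MeasureTheory Set

/-- The (attained) minimum of `f` on a nonempty compact space. -/
noncomputable def minF {X : Type*} (f : X → ℝ) : ℝ := sInf (Set.range f)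

/-- The (attained) maximum of `f` on a nonempty compact space. -/
noncomputable def maxF {X : Type*} (f : X → ℝ) : ℝ := sSup (Set.range f)

/-- The oscillation `max f - min f`. -/
noncomputable def oscF {X : Type*} (f : X → ℝ) : ℝ := maxF f - minF f

/-- `normalize f = f - min f`. -/
noncomputable def normF {X : Type*} (f : X → ℝ) : X → ℝ := fun x => f x - minF f

/-- The minimizer set of `f`. -/
def argminF {X : Type*} (f : X → ℝ) : Set X := {x | f x = minF f}

/-- The maximizer set of `f`. -/
def argmaxF {X : Type*} (f : X → ℝ) : Set X := {x | f x = maxF f}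

section Helpers

set_option linter.unusedSectionVars false

variable {X : Type*} [MetricSpace X] [CompactSpace X] [Nonempty X]

lemma minF_le' {f : X → ℝ} (hf : Continuous f) (x : X) : minF f ≤ f x := by
  have hbdd : BddBelow (Set.range f) := by
    have := (isCompact_univ.image hf).bddBelow
    rwa [Set.image_univ] at this
  exact csInf_le hbdd ⟨x, rfl⟩

lemma minF_eq' {f : X → ℝ} {m : ℝ} (h1 : ∀ x, m ≤ f x) (h2 : ∃ x, f x = m) :
    minF f = m := by
  obtain ⟨x, hx⟩ := h2
  refine le_antisymm (csInf_le ⟨m, by rintro _ ⟨y, rfl⟩; exact h1 y⟩ ⟨x, hx⟩)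
    (le_csInf (Set.range_nonempty f) (by rintro _ ⟨y, rfl⟩; exact h1 y))

lemma minF_attained' {f : X → ℝ} (hf : Continuous f) : ∃ x, f x = minF f := by
  obtain ⟨x, -, hx⟩ := isCompact_univ.exists_isMinOn univ_nonempty hf.continuousOn
  exact ⟨x, (minF_eq' (fun y => hx (mem_univ y)) ⟨x, rfl⟩).symm⟩

lemma maxF_attained' {f : X → ℝ} (hf : Continuous f) : ∃ x, f x = maxF f := by
  obtain ⟨x, -, hx⟩ := isCompact_univ.exists_isMaxOn univ_nonempty hf.continuousOn
  refine ⟨x, le_antisymm (le_csSup ?_ ⟨x, rfl⟩) (csSup_le (Set.range_nonempty f)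
    (by rintro _ ⟨y, rfl⟩; exact hx (mem_univ y)))⟩
  have := (isCompact_univ.image hf).bddAbove
  rwa [Set.image_univ] at this

end Helpers

lemma min_sub_min_nonneg {a b v : ℝ} (h : a ≤ b) : 0 ≤ min b v - min a v := by
  simp only [min_def]; split_ifs <;> linarith

lemma min_sub_min_le {a b v : ℝ} (h : a ≤ b) : min b v - min a v ≤ b - a := by
  simp only [min_def]; split_ifs <;> linarith

theorem stmt_13 {X : Type*} [MetricSpace X] [CompactSpace X] [Nonempty X]
    [MeasurableSpace X] [BorelSpace X]
    (μ : Measure X) [IsFiniteMeasure μ]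
    (hfull : ∀ U : Set X, IsOpen U → U.Nonempty → 0 < μ U)
    (u w : X → ℝ) (hu : Continuous u) (hw : Continuous w)
    (l : ℝ) (hl : 0 < l) (humin : minF u = 0) (humax : maxF u = l)
    (hwmin : minF w = 0) :
    (∀ s ∈ Set.Icc (0:ℝ) 1, ∀ t ∈ Set.Icc (0:ℝ) 1,
      |(∫ x, normF (fun x => min (t * l) (u x) + w x) x ∂μ) -
        ∫ x, normF (fun x => min (s * l) (u x) + w x) x ∂μ| ≤
        |t - s| * l * (μ Set.univ).toReal) ∧
    (∃! t₀ : ℝ, t₀ ∈ Set.Icc (0:ℝ) 1 ∧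
      ∀ t ∈ Set.Icc (0:ℝ) 1,
        (∫ x, normF (fun x => min (t₀ * l) (u x) + w x) x ∂μ) ≤
          ∫ x, normF (fun x => min (t * l) (u x) + w x) x ∂μ) := by
  -- basic points and bounds
  have hw0 : ∀ x, 0 ≤ w x := fun x => hwmin ▸ minF_le' hw x
  have hu0 : ∀ x, 0 ≤ u x := fun x => humin ▸ minF_le' hu x
  obtain ⟨xc, -, hxc⟩ := isCompact_univ.exists_isMinOn univ_nonempty (hu.add hw).continuousOn
  set c : ℝ := u xc + w xc with hcdef
  have hcle : ∀ x, c ≤ u x + w x := fun x => hxc (mem_univ x)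
  have hc0 : 0 ≤ c := add_nonneg (hu0 xc) (hw0 xc)
  obtain ⟨xw, hxw⟩ := minF_attained' hw
  have hxw0 : w xw = 0 := by rw [hxw, hwmin]
  obtain ⟨x0, hx0⟩ := minF_attained' hu
  have hx00 : u x0 = 0 := by rw [hx0, humin]
  obtain ⟨xu, hxu⟩ := maxF_attained' hu
  have hxul : u xu = l := by rw [hxu, humax]
  -- the minimum of h_t
  have hm : ∀ a : ℝ, 0 ≤ a → minF (fun x => min a (u x) + w x) = min a c := by
    intro a ha
    apply minF_eq'
    · intro x
      rcases le_total a (u x) with h|h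
      · rw [min_eq_left h]
        have := hw0 x
        have := min_le_left a c
        linarith
      · rw [min_eq_right h]
        exact le_trans (min_le_right a c) (hcle x)
    · rcases le_total a c with h|h
      · refine ⟨xw, ?_⟩
        have hxwu : a ≤ u xw := by
          have := hcle xw
          rw [hxw0] at this
          linarith
        rw [min_eq_left hxwu, hxw0, add_zero, min_eq_left h]
      · refine ⟨xc, ?_⟩
        have h1 : u xc ≤ a := by have := hw0 xc; rw [hcdef] at h; linarith
        rw [min_eq_right h1, min_eq_right h, hcdef]
  -- integrability
  have hA : ∀ a : ℝ, Integrable (fun x => min a (u x) - min a c) μ := fun a =>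
    Continuous.integrable_of_hasCompactSupport
      ((continuous_const.min hu).sub continuous_const) (HasCompactSupport.of_compactSpace _)
  have hwInt : Integrable w μ :=
    Continuous.integrable_of_hasCompactSupport hw (HasCompactSupport.of_compactSpace _)
  -- rewrite of the integral
  have hIeq : ∀ t : ℝ, 0 ≤ t →
      (∫ x, normF (fun x => min (t * l) (u x) + w x) x ∂μ)
        = (∫ x, (min (t * l) (u x) - min (t * l) c) ∂μ) + ∫ x, w x ∂μ := by
    intro t ht
    have h1 : ∀ x : X, normF (fun x => min (t * l) (u x) + w x) x
        = (min (t * l) (u x) - min (t * l) c) + w x := by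
      intro x
      simp only [normF]
      rw [hm (t * l) (mul_nonneg ht hl.le)]
      ring
    simp only [h1]
    exact integral_add (hA (t * l)) hwInt
  -- difference formula
  have hdiff : ∀ s t : ℝ, 0 ≤ s → 0 ≤ t →
      (∫ x, normF (fun x => min (t * l) (u x) + w x) x ∂μ) -
        (∫ x, normF (fun x => min (s * l) (u x) + w x) x ∂μ)
      = ∫ x, ((min (t * l) (u x) - min (t * l) c) - (min (s * l) (u x) - min (s * l) c)) ∂μ := by
    intro s t hs ht
    rw [hIeq t ht, hIeq s hs, integral_sub (hA (t * l)) (hA (s * l))]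
    ring
  -- Lipschitz bound (ordered version)
  have hLip : ∀ s t : ℝ, 0 ≤ s → s ≤ t →
      |(∫ x, normF (fun x => min (t * l) (u x) + w x) x ∂μ) -
        ∫ x, normF (fun x => min (s * l) (u x) + w x) x ∂μ| ≤
        (t - s) * l * (μ Set.univ).toReal := by
    intro s t hs hst
    rw [hdiff s t hs (le_trans hs hst)]
    have hsltl : s * l ≤ t * l := mul_le_mul_of_nonneg_right hst hl.le
    have hb : ∀ x : X, ‖(min (t * l) (u x) - min (t * l) c) -
        (min (s * l) (u x) - min (s * l) c)‖ ≤ (t - s) * l := by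
      intro x
      have h1 := min_sub_min_nonneg (v := u x) hsltl
      have h2 := min_sub_min_le (v := u x) hsltl
      have h3 := min_sub_min_nonneg (v := c) hsltl
      have h4 := min_sub_min_le (v := c) hsltl
      rw [Real.norm_eq_abs, abs_le]
      constructor <;> nlinarith
    have := norm_integral_le_of_norm_le_const (μ := μ) (C := (t - s) * l)
      (Filter.Eventually.of_forall hb)
    rw [Real.norm_eq_abs, measureReal_def] at this
    linarith [this]
  -- strict decrease before t₀
  have SA : ∀ s t : ℝ, 0 ≤ s → s < t → t ≤ min (c / l) 1 →
      (∫ x, normF (fun x => min (t * l) (u x) + w x) x ∂μ) <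
        ∫ x, normF (fun x => min (s * l) (u x) + w x) x ∂μ := by
    intro s t hs hst ht
    have ht0 : 0 ≤ t := le_of_lt (lt_of_le_of_lt hs hst)
    have htc : t * l ≤ c := by
      have h1 : t ≤ c / l := le_trans ht (min_le_left _ _)
      rwa [le_div_iff₀ hl] at h1
    have hsc : s * l ≤ c := le_trans (mul_le_mul_of_nonneg_right hst.le hl.le) htc
    rw [← sub_neg, hdiff s t hs ht0]
    have hεpos : 0 < (t - s) * l / 2 := by
      have : 0 < t - s := sub_pos.mpr hst
      positivity
    have hVopen : IsOpen {x : X | u x < ((s + t) / 2) * l} := isOpen_lt hu continuous_const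
    have hVne : {x : X | u x < ((s + t) / 2) * l}.Nonempty := by
      refine ⟨x0, ?_⟩
      have hp : 0 < (s + t) / 2 := by linarith
      simp only [mem_setOf_eq, hx00]
      positivity
    have hμV := hfull _ hVopen hVne
    have hle : ∀ x : X, ((min (t * l) (u x) - min (t * l) c) - (min (s * l) (u x) - min (s * l) c))
        ≤ ({x : X | u x < ((s + t) / 2) * l}).indicator (fun _ => -((t - s) * l / 2)) x := by
      intro x
      rw [min_eq_left htc, min_eq_left hsc]
      by_cases hx : x ∈ {x : X | u x < ((s + t) / 2) * l}
      · rw [Set.indicator_of_mem hx]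
        have hxlt : u x < ((s + t) / 2) * l := hx
        have hptl : ((s + t) / 2) * l ≤ t * l :=
          mul_le_mul_of_nonneg_right (by linarith) hl.le
        rw [min_eq_right (le_of_lt (lt_of_lt_of_le hxlt hptl))]
        rcases le_total (s * l) (u x) with h'|h'
        · rw [min_eq_left h']; nlinarith
        · rw [min_eq_right h']; nlinarith
      · rw [Set.indicator_of_notMem hx]
        have := min_sub_min_le (v := u x) (mul_le_mul_of_nonneg_right hst.le hl.le)
        linarith
    have hFint : Integrable (fun x =>
        ((min (t * l) (u x) - min (t * l) c) - (min (s * l) (u x) - min (s * l) c))) μ :=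
      (hA (t * l)).sub (hA (s * l))
    have hGint : Integrable
        (({x : X | u x < ((s + t) / 2) * l}).indicator (fun _ => -((t - s) * l / 2))) μ :=
      (integrable_const _).indicator hVopen.measurableSet
    refine lt_of_le_of_lt (integral_mono hFint hGint hle) ?_
    rw [integral_indicator_const _ hVopen.measurableSet]
    have h1 : 0 < (μ {x : X | u x < ((s + t) / 2) * l}).toReal :=
      ENNReal.toReal_pos hμV.ne' (measure_ne_top μ _)
    simp only [smul_eq_mul, measureReal_def]
    nlinarith
  -- strict increase after t₀
  have SB : ∀ s t : ℝ, min (c / l) 1 ≤ s → s < t → t ≤ 1 →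
      (∫ x, normF (fun x => min (s * l) (u x) + w x) x ∂μ) <
        ∫ x, normF (fun x => min (t * l) (u x) + w x) x ∂μ := by
    intro s t hs hst ht
    have hs0 : 0 ≤ s := le_trans (le_min (div_nonneg hc0 hl.le) zero_le_one) hs
    have ht0 : 0 ≤ t := le_of_lt (lt_of_le_of_lt hs0 hst)
    have hcs : c ≤ s * l := by
      rcases le_total (c / l) 1 with hcl|hcl
      · have h1 : c / l ≤ s := le_trans (le_of_eq (min_eq_left hcl).symm) hs
        rwa [div_le_iff₀ hl] at h1
      · exfalso
        have h1 : (1 : ℝ) ≤ s := le_trans (le_of_eq (min_eq_right hcl).symm) hs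
        linarith
    have hct : c ≤ t * l := le_trans hcs (mul_le_mul_of_nonneg_right hst.le hl.le)
    rw [← sub_pos, hdiff s t hs0 ht0]
    have hεpos : 0 < (t - s) * l / 2 := by
      have : 0 < t - s := sub_pos.mpr hst
      positivity
    have hVopen : IsOpen {x : X | ((s + t) / 2) * l < u x} := isOpen_lt continuous_const hu
    have hVne : {x : X | ((s + t) / 2) * l < u x}.Nonempty := by
      refine ⟨xu, ?_⟩
      simp only [mem_setOf_eq, hxul]
      nlinarith
    have hμV := hfull _ hVopen hVne
    have hle : ∀ x : X,
        ({x : X | ((s + t) / 2) * l < u x}).indicator (fun _ => (t - s) * l / 2) x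
        ≤ ((min (t * l) (u x) - min (t * l) c) - (min (s * l) (u x) - min (s * l) c)) := by
      intro x
      rw [min_eq_right hct, min_eq_right hcs]
      by_cases hx : x ∈ {x : X | ((s + t) / 2) * l < u x}
      · rw [Set.indicator_of_mem hx]
        have hxgt : ((s + t) / 2) * l < u x := hx
        have hspl : s * l ≤ ((s + t) / 2) * l :=
          mul_le_mul_of_nonneg_right (by linarith) hl.le
        rw [min_eq_left (le_of_lt (lt_of_le_of_lt hspl hxgt))]
        rcases le_total (t * l) (u x) with h'|h'
        · rw [min_eq_left h']; nlinarith
        · rw [min_eq_right h']; nlinarith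
      · rw [Set.indicator_of_notMem hx]
        have := min_sub_min_nonneg (v := u x) (mul_le_mul_of_nonneg_right hst.le hl.le)
        linarith
    have hFint : Integrable (fun x =>
        ((min (t * l) (u x) - min (t * l) c) - (min (s * l) (u x) - min (s * l) c))) μ :=
      (hA (t * l)).sub (hA (s * l))
    have hGint : Integrable
        (({x : X | ((s + t) / 2) * l < u x}).indicator (fun _ => (t - s) * l / 2)) μ :=
      (integrable_const _).indicator hVopen.measurableSet
    refine lt_of_lt_of_le ?_ (integral_mono hGint hFint hle)
    rw [integral_indicator_const _ hVopen.measurableSet]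
    have h1 : 0 < (μ {x : X | ((s + t) / 2) * l < u x}).toReal :=
      ENNReal.toReal_pos hμV.ne' (measure_ne_top μ _)
    simp only [smul_eq_mul, measureReal_def]
    nlinarith
  have ht₀mem : min (c / l) 1 ∈ Set.Icc (0:ℝ) 1 :=
    ⟨le_min (div_nonneg hc0 hl.le) zero_le_one, min_le_right _ _⟩
  constructor
  · -- Lipschitz part
    intro s hs t ht
    rcases le_total s t with h|h
    · rw [show |t - s| = t - s from abs_of_nonneg (sub_nonneg.mpr h)]
      exact hLip s t hs.1 h
    · have H := hLip t s ht.1 h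
      rw [abs_sub_comm, show |t - s| = s - t from by
        rw [abs_sub_comm]; exact abs_of_nonneg (sub_nonneg.mpr h)]
      exact H
  · -- unique minimizer
    refine ⟨min (c / l) 1, ⟨ht₀mem, ?_⟩, ?_⟩
    · intro t ht
      rcases lt_trichotomy t (min (c / l) 1) with h|h|h
      · exact le_of_lt (SA t (min (c / l) 1) ht.1 h le_rfl)
      · exact le_of_eq (by rw [h])
      · exact le_of_lt (SB (min (c / l) 1) t le_rfl h ht.2)
    · rintro t₁ ⟨ht₁, hmin₁⟩
      by_contra hne
      rcases lt_or_gt_of_ne hne with h|h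
      · have h1 := SA t₁ (min (c / l) 1) ht₁.1 h le_rfl
        have h2 := hmin₁ (min (c / l) 1) ht₀mem
        linarith
      · have h1 := SB (min (c / l) 1) t₁ le_rfl h ht₁.2
        have h2 := hmin₁ (min (c / l) 1) ht₀mem
        linarith
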